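/- arXiv:1203.6432 — 3 statements merged into one kernel-verified Lean document; each statement's English description precedes it below -/
import Mathlib

section
/- Suppose M is uniformly continuous and let Λ ∈ E_⊥(M). Then F(Λ)(Ω) = 1, where F(Λ) is the pushforward of Λ under the coding map F. -/
open MeasureTheory Filter Topology
open scoped ENNReal NNReal Classical

noncomputable section

/-- A countable Markov system `(K_{i(e)}, w_e, p_e)_{e ∈ E}` on a metric space `K`:
a partition `(K_j)_{j ∈ N}` of `K` into nonempty Borel sets, source and target maps
`i, t : E → N` (`i` surjective), and for each `e ∈ E` Borel maps `w_e` and probability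
functions `p_e` (extended by zero outside `K_{i(e)}`) with
`∑_{e, i(e)=j} p_e(y) = 1` for `y ∈ K_j`. -/
structure MarkovSystem (K : Type*) [MetricSpace K] [MeasurableSpace K]
    (N : Type*) (E : Type*) where
  Kset : N → Set K
  Kset_nonempty : ∀ j, (Kset j).Nonempty
  Kset_measurable : ∀ j, MeasurableSet (Kset j)
  Kset_disjoint : Pairwise (Function.onFun Disjoint Kset)
  Kset_cover : (⋃ j, Kset j) = Set.univ
  i : E → N
  t : E → N
  i_surj : Function.Surjective i
  w : E → K → K
  p : E → K → ℝ
  w_measurable : ∀ e, Measurable (w e)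
  p_measurable : ∀ e, Measurable (p e)
  p_nonneg : ∀ e x, 0 ≤ p e x
  p_le_one : ∀ e x, p e x ≤ 1
  p_zero_outside : ∀ e x, x ∉ Kset (i e) → p e x = 0
  w_mapsTo : ∀ e, Set.MapsTo (w e) (Kset (i e)) (Kset (t e))
  p_pos_somewhere : ∀ e, ∃ x ∈ Kset (i e), 0 < p e x
  p_tsum_one : ∀ j, ∀ x ∈ Kset j, (∑' e : {e : E // i e = j}, p e.val x) = 1

/-- `Ē = E ∪ {∞}` (one-point compactification); with `E` countable its Borel σ-algebra
consists of all subsets. -/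
instance optionMeasurableSpace (E : Type*) : MeasurableSpace (Option E) := ⊤

/-- The code space `Σ̄ = Ē^ℤ`, carrying the product σ-algebra. -/
abbrev CodeSpace (E : Type*) : Type _ := ℤ → Option E

/-- The left shift `S` on the code space, `(Sσ)_{k-1} = σ_k`. -/
def shiftMap (E : Type*) : CodeSpace E → CodeSpace E := fun σ k => σ (k + 1)

/-- The cylinder set `_m[es₀, …, es_{n}] = {σ : σ_{m+k} = es_k}`. -/
def cylSetL {E : Type*} (m : ℤ) (es : List (Option E)) : Set (CodeSpace E) :=
  {σ | ∀ (k : ℕ) (h : k < es.length), σ (m + (k : ℤ)) = es.get ⟨k, h⟩}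

/-- The σ-algebra `𝓕` generated by the cylinder sets `_m[e_m, …, e_0]`, `m ≤ 0`. -/
def pastAlgebra (E : Type*) : MeasurableSpace (CodeSpace E) :=
  MeasurableSpace.generateFrom
    {A | ∃ es : List (Option E), es ≠ [] ∧ A = cylSetL (1 - (es.length : ℤ)) es}

/-- The conditional entropy `h_S(Λ) = H_Λ((_1[e])_{e ∈ Ē} | 𝓕)`. -/
def entropyS {E : Type*} (Λ : Measure (CodeSpace E)) : ℝ≥0∞ :=
  ∑' eo : Option E,
    ∫⁻ σ, ENNReal.ofReal
        (Real.negMulLog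
          ((Λ[Set.indicator {τ : CodeSpace E | τ 1 = eo} (fun _ => (1 : ℝ)) | pastAlgebra E]) σ)) ∂Λ

namespace MarkovSystem

variable {K : Type*} [MetricSpace K] [MeasurableSpace K] {N E : Type*}

/-- The Markov operator `Uf = ∑_e p_e · (f ∘ w_e)` acting on nonnegative Borel functions. -/
def markovOp (M : MarkovSystem K N E) (f : K → ℝ≥0∞) : K → ℝ≥0∞ :=
  fun x => ∑' e : E, ENNReal.ofReal (M.p e x) * f (M.w e x)

/-- The adjoint operator `U*` acting on measures, `(U*ν)(B) = ∫ U(1_B) dν`. -/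
def adjOp (M : MarkovSystem K N E) (ν : Measure K) : Measure K :=
  Measure.sum fun e : E =>
    Measure.map (M.w e) (ν.withDensity fun x => ENNReal.ofReal (M.p e x))

/-- `μ ∈ P(M)`: `μ` is an invariant Borel probability measure, `U*μ = μ`. -/
def IsInvariantMeasure (M : MarkovSystem K N E) (μ : Measure K) : Prop :=
  IsProbabilityMeasure μ ∧ M.adjOp μ = μ

/-- The path space `Σ_G`: all coordinates lie in `E` and `i(σ_{n+1}) = t(σ_n)`. -/
def pathSpace (M : MarkovSystem K N E) : Set (CodeSpace E) :=
  {σ | ∀ n : ℤ, ∃ e e' : E, σ n = some e ∧ σ (n + 1) = some e' ∧ M.i e' = M.t e}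

/-- `T_j = {σ ∈ Σ_G : t(σ_0) = j}`. -/
def Tset (M : MarkovSystem K N E) (j : N) : Set (CodeSpace E) :=
  {σ | σ ∈ M.pathSpace ∧ ∃ e : E, σ 0 = some e ∧ M.t e = j}

/-- `w` extended to `Ē`, with `w_∞ = id`. -/
def wext (M : MarkovSystem K N E) : Option E → K → K := fun o => o.elim id M.w

/-- `p` extended to `Ē`, with `p_∞ = 0`. -/
def pext (M : MarkovSystem K N E) : Option E → K → ℝ := fun o => o.elim (fun _ => 0) M.p

/-- `i` extended to `Ē`, with `i(∞) = j₀`. -/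
def iext (M : MarkovSystem K N E) (j0 : N) : Option E → N := fun o => o.elim j0 M.i

/-- `t` extended to `Ē`, with `t(∞) = j₀`. -/
def text (M : MarkovSystem K N E) (j0 : N) : Option E → N := fun o => o.elim j0 M.t

/-- `iterW M σ n y = w_{σ_0} ∘ w_{σ_{-1}} ∘ ⋯ ∘ w_{σ_{-n}} (y)`. -/
def iterW (M : MarkovSystem K N E) (σ : CodeSpace E) : ℕ → K → K
  | 0, y => M.wext (σ 0) y
  | n + 1, y => M.iterW σ n (M.wext (σ (-(n + 1 : ℤ))) y)

/-- `orbit M j0 xp σ n = w_{σ_0} ∘ ⋯ ∘ w_{σ_{-n}} (x_{i(σ_{-n})})`. -/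
def orbit (M : MarkovSystem K N E) (j0 : N) (xp : N → K) (σ : CodeSpace E) (n : ℕ) : K :=
  M.iterW σ n (xp (M.iext j0 (σ (-(n : ℤ)))))

/-- `D`: the set of `σ ∈ Σ_G` for which `lim_{m → -∞} w_{σ_0} ∘ ⋯ ∘ w_{σ_m}(x_{i(σ_m)})` exists. -/
def codeDomain (M : MarkovSystem K N E) (j0 : N) (xp : N → K) : Set (CodeSpace E) :=
  {σ | σ ∈ M.pathSpace ∧ ∃ l : K, Tendsto (fun n : ℕ => M.orbit j0 xp σ n) atTop (𝓝 l)}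

/-- The coding map `F`: the above limit on `D`, and `x_{t(σ_0)}` elsewhere. -/
def code (M : MarkovSystem K N E) (j0 : N) (xp : N → K) (σ : CodeSpace E) : K :=
  if h : σ ∈ M.codeDomain j0 xp then h.2.choose else xp (M.text j0 (σ 0))

/-- `Λ ∈ E(M)`: `Λ` is a shift-invariant Borel probability measure with `Λ(D) = 1` and
`E_Λ(1_{_1[e]} | 𝓕) = p_e ∘ F` `Λ`-a.e. for every `e ∈ E` (an equilibrium state). -/
def IsEquilibrium (M : MarkovSystem K N E) (j0 : N) (xp : N → K)
    (Λ : Measure (CodeSpace E)) : Prop :=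
  IsProbabilityMeasure Λ ∧ Measure.map (shiftMap E) Λ = Λ ∧
    Λ (M.codeDomain j0 xp) = 1 ∧
    ∀ e : E,
      (Λ[Set.indicator {σ : CodeSpace E | σ 1 = some e} (fun _ => (1 : ℝ)) | pastAlgebra E])
        =ᵐ[Λ] fun σ => M.p e (M.code j0 xp σ)

/-- `pbar` is the family of continuous extensions `p̄_e` of `p_e|_{K_{i(e)}}` to the closure
of `K_{i(e)}`, extended further by zero on `K`. -/
def IsUCExtensionP (M : MarkovSystem K N E) (pbar : E → K → ℝ) : Prop :=
  ∀ e : E, ContinuousOn (pbar e) (closure (M.Kset (M.i e))) ∧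
    (∀ x ∈ M.Kset (M.i e), pbar e x = M.p e x) ∧
    (∀ x, x ∉ closure (M.Kset (M.i e)) → pbar e x = 0)

/-- `wb` is a family of continuous extensions `w̄_e` of `w_e|_{K_{i(e)}}` to the closure
of `K_{i(e)}`. -/
def IsUCExtensionW (M : MarkovSystem K N E) (wb : E → K → K) : Prop :=
  ∀ e : E, ContinuousOn (wb e) (closure (M.Kset (M.i e))) ∧
    (∀ x ∈ M.Kset (M.i e), wb e x = M.w e x)

/-- The Markov system is uniformly continuous: each `w_e|_{K_{i(e)}}` and `p_e|_{K_{i(e)}}`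
is uniformly continuous. -/
def IsUniformlyContinuous (M : MarkovSystem K N E) : Prop :=
  ∀ e : E, UniformContinuousOn (M.w e) (M.Kset (M.i e)) ∧
    UniformContinuousOn (M.p e) (M.Kset (M.i e))

/-- `∂p_e = p̄_e · 1_{cl(K_{i(e)}) \ K_{i(e)}}`. -/
def dp (M : MarkovSystem K N E) (pbar : E → K → ℝ) (e : E) : K → ℝ :=
  Set.indicator (closure (M.Kset (M.i e)) \ M.Kset (M.i e)) (pbar e)

/-- `Λ ∈ Ẽ(M)` (asymptotic state): shift-invariant probability with `Λ(D) = 1` and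
`E_Λ(1_{_1[e]} | 𝓕) = (p̄_e ∘ F)·1_{T_{i(e)}}` `Λ`-a.e. for every `e`. -/
def IsAsymptotic (M : MarkovSystem K N E) (j0 : N) (xp : N → K) (pbar : E → K → ℝ)
    (Λ : Measure (CodeSpace E)) : Prop :=
  IsProbabilityMeasure Λ ∧ Measure.map (shiftMap E) Λ = Λ ∧
    Λ (M.codeDomain j0 xp) = 1 ∧
    ∀ e : E,
      (Λ[Set.indicator {σ : CodeSpace E | σ 1 = some e} (fun _ => (1 : ℝ)) | pastAlgebra E])
        =ᵐ[Λ] Set.indicator (M.Tset (M.i e)) (fun σ => pbar e (M.code j0 xp σ))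

/-- `Λ ∈ E_⊥(M)`: shift-invariant probability with `Λ(D) = 1` and
`E_Λ(1_{_1[e]} | 𝓕) = (∂p_e ∘ F)·1_{T_{i(e)}}` `Λ`-a.e. for every `e`. -/
def IsPerp (M : MarkovSystem K N E) (j0 : N) (xp : N → K) (pbar : E → K → ℝ)
    (Λ : Measure (CodeSpace E)) : Prop :=
  IsProbabilityMeasure Λ ∧ Measure.map (shiftMap E) Λ = Λ ∧
    Λ (M.codeDomain j0 xp) = 1 ∧
    ∀ e : E,
      (Λ[Set.indicator {σ : CodeSpace E | σ 1 = some e} (fun _ => (1 : ℝ)) | pastAlgebra E])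
        =ᵐ[Λ] Set.indicator (M.Tset (M.i e)) (fun σ => M.dp pbar e (M.code j0 xp σ))

/-- `G = ⋃_{k ≥ 0} ⋃_{j ∈ N} S^{-k}(F^{-1}(K_j) ∩ T_j)`. -/
def Gset (M : MarkovSystem K N E) (j0 : N) (xp : N → K) : Set (CodeSpace E) :=
  ⋃ (k : ℕ) (j : N), (shiftMap E)^[k] ⁻¹' ((M.code j0 xp) ⁻¹' (M.Kset j) ∩ M.Tset j)

/-- `M` is non-degenerate: for every asymptotic state `Λ` there is `i ∈ N` with
`Λ(T_i ∩ F^{-1}(K_i)) > 0`. -/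
def IsNonDegenerate (M : MarkovSystem K N E) (j0 : N) (xp : N → K) (pbar : E → K → ℝ) : Prop :=
  ∀ Λ : Measure (CodeSpace E), M.IsAsymptotic j0 xp pbar Λ →
    ∃ i : N, 0 < Λ (M.Tset i ∩ (M.code j0 xp) ⁻¹' (M.Kset i))

/-- `M` is consistent: `F(Λ) ∈ P(M)` for every asymptotic state `Λ`. -/
def IsConsistent (M : MarkovSystem K N E) (j0 : N) (xp : N → K) (pbar : E → K → ℝ) : Prop :=
  ∀ Λ : Measure (CodeSpace E), M.IsAsymptotic j0 xp pbar Λ →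
    M.IsInvariantMeasure (Measure.map (M.code j0 xp) Λ)

/-- `Rf = ∑_e ∂p_e · (f ∘ w̄_e)`. -/
def Rop (M : MarkovSystem K N E) (pbar : E → K → ℝ) (wb : E → K → K)
    (f : K → ℝ≥0∞) : K → ℝ≥0∞ :=
  fun x => ∑' e : E, ENNReal.ofReal (M.dp pbar e x) * f (wb e x)

/-- `Ω = ⋂_{n ≥ 1} {R^n 1 ≥ 1}`. -/
def OmegaSet (M : MarkovSystem K N E) (pbar : E → K → ℝ) (wb : E → K → K) : Set K :=
  ⋂ n : ℕ, {x : K | 1 ≤ (M.Rop pbar wb)^[n + 1] (fun _ => 1) x}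

/-- `ξ_j = ∑_{e, i(e) = j} sup_{x ∈ K_j} p_e(x)`. -/
def xi (M : MarkovSystem K N E) (j : N) : ℝ≥0∞ :=
  ∑' e : {e : E // M.i e = j}, ⨆ x ∈ M.Kset j, ENNReal.ofReal (M.p e.val x)

/-- `M` has a dominating Markov chain: `ξ_j < ∞` for all `j ∈ N`. -/
def HasDominatingChain (M : MarkovSystem K N E) : Prop := ∀ j : N, M.xi j ≠ ⊤

/-- `ξ_j · q_{j j'} = ∑_{e, i(e) = j, t(e) = j'} sup_{x ∈ K_j} p_e(x)`. -/
def xiq (M : MarkovSystem K N E) (j j' : N) : ℝ≥0∞ :=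
  ∑' e : {e : E // M.i e = j ∧ M.t e = j'}, ⨆ x ∈ M.Kset j, ENNReal.ofReal (M.p e.val x)

/-- `c = ∑_{j'} sup_j ξ_j q_{j j'}`. -/
def cConst (M : MarkovSystem K N E) : ℝ≥0∞ := ∑' j' : N, ⨆ j : N, M.xiq j j'

/-- `α^{x_0}_n({j}) = (1/n) ∑_{k=1}^n ((U*)^k δ_{x_0})(K_j)`. -/
def alphaMeas (M : MarkovSystem K N E) (x0 : K) (n : ℕ) (j : N) : ℝ≥0∞ :=
  (n : ℝ≥0∞)⁻¹ * ∑ k ∈ Finset.range n, (M.adjOp^[k + 1] (Measure.dirac x0)) (M.Kset j)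

/-- Condition (T) at `x_0`: the sequence `(α^{x_0}_n)_n` is uniformly tight. -/
def ConditionT (M : MarkovSystem K N E) (x0 : K) : Prop :=
  ∀ ε : ℝ, 0 < ε → ∃ V : Finset N,
    ∀ n : ℕ, (∑' j : {j : N // j ∉ V}, M.alphaMeas x0 (n + 1) j.val) < ENNReal.ofReal ε

/-- `M` is contractive with contraction rate `a`:
`∑_{e, i(e) = j} p_e(x) d(w_e x, w_e y) ≤ a·d(x, y)` on each `K_j`. -/
def IsContractive (M : MarkovSystem K N E) (a : ℝ) : Prop :=
  ∀ j : N, ∀ x ∈ M.Kset j, ∀ y ∈ M.Kset j,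
    (∑' e : {e : E // M.i e = j},
        ENNReal.ofReal (M.p e.val x * dist (M.w e.val x) (M.w e.val y)))
      ≤ ENNReal.ofReal (a * dist x y)

/-- `L(x) = ∑_j d(x, x_j)·1_{K_j}(x)`. -/
def Lfun (M : MarkovSystem K N E) (xp : N → K) : K → ℝ≥0∞ :=
  fun x => ∑' j : N, Set.indicator (M.Kset j) (fun y => ENNReal.ofReal (dist y (xp j))) x

/-- `b = sup_j sup_{x ∈ K_j} ∑_{e, i(e) = j} p_e(x)·d(w_e(x_{i(e)}), x_{t(e)})`. -/
def bConst (M : MarkovSystem K N E) (xp : N → K) : ℝ≥0∞ :=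
  ⨆ j : N, ⨆ x ∈ M.Kset j,
    ∑' e : {e : E // M.i e = j},
      ENNReal.ofReal (M.p e.val x * dist (M.w e.val (xp (M.i e.val))) (xp (M.t e.val)))

/-- `P^m_x` evaluated on a word: `p_{e_0}(x)·p_{e_1}(w_{e_0}x)·⋯`. -/
def wordProb (M : MarkovSystem K N E) : List (Option E) → K → ℝ
  | [], _ => 1
  | o :: rest, x => M.pext o x * M.wordProb rest (M.wext o x)

/-- `Λ = Φ(μ)`: `Λ` is a shift-invariant Borel probability measure with
`Λ(_m[e_m, …, e_n]) = ∫ P^m_x(_m[e_m, …, e_n]) dμ(x)` for all cylinders with `m ≤ 0`. -/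
def IsPhiOf (M : MarkovSystem K N E) (μ : Measure K) (Λ : Measure (CodeSpace E)) : Prop :=
  IsProbabilityMeasure Λ ∧ Measure.map (shiftMap E) Λ = Λ ∧
    ∀ m : ℤ, m ≤ 0 → ∀ es : List (Option E),
      Λ (cylSetL m es) = ∫⁻ x, ENNReal.ofReal (M.wordProb es x) ∂μ

/-- The (negative of the) energy function: `-u(σ) = -log p_{σ_1}(F(σ))` on `D`
(`+∞` if `p_{σ_1}(F(σ)) = 0`) and `+∞` off `D`, valued in `[0, ∞]`. -/
def negEnergy (M : MarkovSystem K N E) (j0 : N) (xp : N → K) (σ : CodeSpace E) : ℝ≥0∞ :=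
  if σ ∈ M.codeDomain j0 xp then
    (σ 1).elim ⊤ fun e =>
      if M.p e (M.code j0 xp σ) = 0 then ⊤
      else ENNReal.ofReal (-Real.log (M.p e (M.code j0 xp σ)))
  else ⊤

/-- The free energy `h_S(Λ) + ∫ u dΛ`, as an extended real number. -/
def freeEnergy (M : MarkovSystem K N E) (j0 : N) (xp : N → K)
    (Λ : Measure (CodeSpace E)) : EReal :=
  (entropyS Λ : EReal) - ((∫⁻ σ, M.negEnergy j0 xp σ ∂Λ : ℝ≥0∞) : EReal)

/-- `Λ₀ ∈ E(u)`: `Λ₀` is a thermodynamic equilibrium state for the energy function `u`. -/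
def IsEquilibriumForU (M : MarkovSystem K N E) (j0 : N) (xp : N → K)
    (Λ0 : Measure (CodeSpace E)) : Prop :=
  IsProbabilityMeasure Λ0 ∧ Measure.map (shiftMap E) Λ0 = Λ0 ∧ entropyS Λ0 ≠ ⊤ ∧
    M.freeEnergy j0 xp Λ0 =
      sSup {r : EReal | ∃ Λ : Measure (CodeSpace E),
        IsProbabilityMeasure Λ ∧ Measure.map (shiftMap E) Λ = Λ ∧ entropyS Λ ≠ ⊤ ∧
          r = M.freeEnergy j0 xp Λ}

end MarkovSystem

end


set_option linter.unusedSectionVars false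

noncomputable section AuxPerp

open MarkovSystem

variable {K : Type*} [MetricSpace K] [MeasurableSpace K] [BorelSpace K]
  {N E : Type*} [Countable N] [Countable E]

lemma measurable_shiftMap : Measurable (shiftMap E) :=
  measurable_pi_lambda _ fun k => measurable_pi_apply (k + 1)

lemma measurableSet_option (s : Set (Option E)) : MeasurableSet s :=
  MeasurableSpace.measurableSet_top

lemma measurableSet_coordSet (n : ℤ) (o : Option E) :
    MeasurableSet {σ : CodeSpace E | σ n = o} := by
  have : {σ : CodeSpace E | σ n = o} = (fun σ : CodeSpace E => σ n) ⁻¹' {o} := rfl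
  rw [this]
  exact measurable_pi_apply n (measurableSet_option {o})

lemma cylSetL_measurableSet (m : ℤ) (es : List (Option E)) :
    MeasurableSet (cylSetL (E := E) m es) := by
  have h : cylSetL (E := E) m es =
      ⋂ (k : ℕ) (h : k < es.length), {σ : CodeSpace E | σ (m + (k : ℤ)) = es.get ⟨k, h⟩} := by
    ext σ
    simp only [cylSetL, Set.mem_setOf_eq, Set.mem_iInter]
  rw [h]
  exact MeasurableSet.iInter fun k => MeasurableSet.iInter fun hk =>
    measurableSet_coordSet _ _

lemma pastAlgebra_le : pastAlgebra E ≤ (inferInstance : MeasurableSpace (CodeSpace E)) := by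
  refine MeasurableSpace.generateFrom_le ?_
  rintro A ⟨es, -, rfl⟩
  exact cylSetL_measurableSet _ _

lemma measurableSet_coord_past {k : ℤ} (hk : k ≤ 0) (o : Option E) :
    MeasurableSet[pastAlgebra E] {σ : CodeSpace E | σ k = o} := by
  obtain ⟨r, rfl⟩ : ∃ r : ℕ, k = -(r : ℤ) := ⟨(-k).toNat, by omega⟩
  have heq : {σ : CodeSpace E | σ (-(r : ℤ)) = o} =
      ⋃ (v : Fin (r + 1) → Option E) (_ : v 0 = o),
        cylSetL (1 - ((List.ofFn v).length : ℤ)) (List.ofFn v) := by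
    ext σ
    simp only [Set.mem_iUnion, Set.mem_setOf_eq, List.length_ofFn]
    constructor
    · intro h
      refine ⟨fun kk => σ (-(r : ℤ) + kk), by simpa using h, ?_⟩
      intro k hk'
      rw [List.get_ofFn]
      simp only [List.length_ofFn, Fin.coe_cast]
      congr 1
      push_cast
      ring
    · rintro ⟨v, hv0, hcyl⟩
      have h0 := hcyl 0 (by simp)
      rw [List.get_ofFn] at h0
      rw [show (1 - (((r : ℕ) + 1 : ℕ) : ℤ) + ((0 : ℕ) : ℤ)) = -(r : ℤ) by push_cast; ring] at h0
      rw [h0, ← hv0]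
      congr 1
  rw [heq]
  refine MeasurableSet.iUnion fun v => MeasurableSet.iUnion fun _ =>
    MeasurableSpace.measurableSet_generateFrom ⟨List.ofFn v, by simp, rfl⟩

lemma measurable_coord_past {k : ℤ} (hk : k ≤ 0) :
    Measurable[pastAlgebra E] (fun σ : CodeSpace E => σ k) := by
  intro s _
  have h : (fun σ : CodeSpace E => σ k) ⁻¹' s = ⋃ o ∈ s, {σ : CodeSpace E | σ k = o} := by
    ext σ; simp
  rw [h]
  exact MeasurableSet.biUnion s.to_countable fun o _ => measurableSet_coord_past hk o

lemma measurableSet_word {m : ℕ} (s : Set (Fin m → Option E)) : MeasurableSet s := by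
  have h1 : ∀ v : Fin m → Option E, MeasurableSet {v} := by
    intro v
    have : {v} = ⋂ k : Fin m, (fun w : Fin m → Option E => w k) ⁻¹' {v k} := by
      ext w; simp [funext_iff]
    rw [this]
    exact MeasurableSet.iInter fun k => measurable_pi_apply k (measurableSet_option {v k})
  have h2 : s = ⋃ v ∈ s, {v} := by ext w; simp
  rw [h2]
  exact MeasurableSet.biUnion s.to_countable fun v _ => h1 v

lemma measurable_word_fn {m : ℕ} {β : Type*} [MeasurableSpace β]
    (g : (Fin m → Option E) → β) : Measurable g := fun _ _ => measurableSet_word _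

lemma measurable_wordMap_past (m : ℕ) :
    Measurable[pastAlgebra E] (fun (σ : CodeSpace E) (k : Fin m) => σ (-((k : ℕ) : ℤ))) := by
  letI : MeasurableSpace (CodeSpace E) := pastAlgebra E
  exact measurable_pi_lambda _ fun k => measurable_coord_past (by omega)

lemma iterW_congr (M : MarkovSystem K N E) {σ τ : CodeSpace E} :
    ∀ (n : ℕ) (y : K), (∀ z : ℤ, -(n : ℤ) ≤ z → z ≤ 0 → σ z = τ z) →
      M.iterW σ n y = M.iterW τ n y
  | 0, y, h => by
      simp only [MarkovSystem.iterW]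
      rw [h 0 (by omega) le_rfl]
  | (n+1), y, h => by
      simp only [MarkovSystem.iterW]
      rw [h (-((n : ℤ) + 1)) (by push_cast; omega) (by omega)]
      exact iterW_congr M n _ fun z h1 h2 => h z (by push_cast at h1 ⊢; omega) h2

lemma orbit_congr (M : MarkovSystem K N E) (j0 : N) (xp : N → K) {σ τ : CodeSpace E} (n : ℕ)
    (h : ∀ z : ℤ, -(n : ℤ) ≤ z → z ≤ 0 → σ z = τ z) :
    M.orbit j0 xp σ n = M.orbit j0 xp τ n := by
  unfold MarkovSystem.orbit
  rw [h (-(n : ℤ)) le_rfl (by omega)]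
  exact iterW_congr M n _ h

lemma measurable_orbit_past (M : MarkovSystem K N E) (j0 : N) (xp : N → K) (n : ℕ) :
    Measurable[pastAlgebra E] (fun σ => M.orbit j0 xp σ n) := by
  classical
  have key : (fun σ => M.orbit j0 xp σ n) =
      (fun v : Fin (n + 1) → Option E =>
        M.orbit j0 xp
          (fun z : ℤ => if h : 0 ≤ -z ∧ (-z).toNat < n + 1 then v ⟨(-z).toNat, h.2⟩ else none) n)
      ∘ (fun (σ : CodeSpace E) (k : Fin (n + 1)) => σ (-((k : ℕ) : ℤ))) := by
    funext σ
    refine orbit_congr M j0 xp n ?_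
    intro z h1 h2
    have hc : 0 ≤ -z ∧ (-z).toNat < n + 1 := by omega
    show σ z = _
    rw [dif_pos hc]
    congr 1
    show z = -(((-z).toNat : ℕ) : ℤ)
    omega
  rw [key]
  exact (measurable_word_fn _).comp (measurable_wordMap_past (n + 1))

lemma measurableSet_pathSpace (M : MarkovSystem K N E) : MeasurableSet M.pathSpace := by
  have h : M.pathSpace = ⋂ n : ℤ, ⋃ (e : E) (e' : E) (_ : M.i e' = M.t e),
      ({σ : CodeSpace E | σ n = some e} ∩ {σ : CodeSpace E | σ (n + 1) = some e'}) := by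
    ext σ
    simp only [MarkovSystem.pathSpace, Set.mem_setOf_eq, Set.mem_iInter, Set.mem_iUnion,
      Set.mem_inter_iff]
    constructor
    · intro h n; obtain ⟨e, e', h1, h2, h3⟩ := h n; exact ⟨e, e', h3, h1, h2⟩
    · intro h n; obtain ⟨e, e', h3, h1, h2⟩ := h n; exact ⟨e, e', h1, h2, h3⟩
  rw [h]
  exact MeasurableSet.iInter fun n => MeasurableSet.iUnion fun e => MeasurableSet.iUnion fun e' =>
    MeasurableSet.iUnion fun _ =>
      (measurableSet_coordSet n (some e)).inter (measurableSet_coordSet (n + 1) (some e'))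

lemma measurableSet_conv [CompleteSpace K] {α : Type*} [mα : MeasurableSpace α]
    (f : ℕ → α → K) (hf : ∀ a b : ℕ, Measurable fun x => dist (f a x) (f b x)) :
    MeasurableSet {x | ∃ l, Tendsto (fun n => f n x) atTop (𝓝 l)} := by
  have h1 : {x | ∃ l, Tendsto (fun n => f n x) atTop (𝓝 l)}
      = {x | CauchySeq fun n => f n x} := by
    ext x
    constructor
    · rintro ⟨l, hl⟩; exact hl.cauchySeq
    · intro h; exact cauchySeq_tendsto_of_complete h
  have h2 : {x | CauchySeq fun n => f n x} =
      ⋂ k : ℕ, ⋃ Nn : ℕ, ⋂ (a : ℕ) (b : ℕ),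
        {x | dist (f (Nn + a) x) (f (Nn + b) x) < 1 / ((k : ℝ) + 1)} := by
    ext x
    simp only [Set.mem_setOf_eq, Set.mem_iInter, Set.mem_iUnion]
    constructor
    · intro h k
      rw [Metric.cauchySeq_iff] at h
      obtain ⟨Nn, hN⟩ := h (1 / ((k : ℝ) + 1)) (by positivity)
      exact ⟨Nn, fun a b => hN _ (Nat.le_add_right _ _) _ (Nat.le_add_right _ _)⟩
    · intro h
      rw [Metric.cauchySeq_iff']
      intro ε hε
      obtain ⟨k, hk⟩ := exists_nat_one_div_lt hε
      obtain ⟨Nn, hN⟩ := h k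
      refine ⟨Nn, fun n hn => ?_⟩
      obtain ⟨a, rfl⟩ := Nat.exists_eq_add_of_le hn
      have h3 := hN a 0
      rw [Nat.add_zero] at h3
      exact h3.trans hk
  rw [h1, h2]
  exact MeasurableSet.iInter fun k => MeasurableSet.iUnion fun Nn =>
    MeasurableSet.iInter fun a => MeasurableSet.iInter fun b =>
      (hf _ _) measurableSet_Iio

lemma measurable_orbit_dist_past (M : MarkovSystem K N E) (j0 : N) (xp : N → K) (a b : ℕ) :
    Measurable[pastAlgebra E] (fun σ => dist (M.orbit j0 xp σ a) (M.orbit j0 xp σ b)) := by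
  classical
  set m := max a b + 1 with hm
  have hrec : ∀ (σ : CodeSpace E) (c : ℕ), c < m →
      M.orbit j0 xp σ c = M.orbit j0 xp
        (fun z : ℤ => if h : 0 ≤ -z ∧ (-z).toNat < m
          then (fun k : Fin m => σ (-((k : ℕ) : ℤ))) ⟨(-z).toNat, h.2⟩ else none) c := by
    intro σ c hc
    refine orbit_congr M j0 xp c ?_
    intro z h1 h2
    have hcz : 0 ≤ -z ∧ (-z).toNat < m := by omega
    show σ z = _
    rw [dif_pos hcz]
    congr 1
    show z = -(((-z).toNat : ℕ) : ℤ)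
    omega
  have key : (fun σ => dist (M.orbit j0 xp σ a) (M.orbit j0 xp σ b)) =
      (fun v : Fin m → Option E =>
        dist
          (M.orbit j0 xp
            (fun z : ℤ => if h : 0 ≤ -z ∧ (-z).toNat < m then v ⟨(-z).toNat, h.2⟩ else none) a)
          (M.orbit j0 xp
            (fun z : ℤ => if h : 0 ≤ -z ∧ (-z).toNat < m then v ⟨(-z).toNat, h.2⟩ else none) b))
      ∘ (fun (σ : CodeSpace E) (k : Fin m) => σ (-((k : ℕ) : ℤ))) := by
    funext σ
    show _ = dist _ _
    rw [← hrec σ a (by omega), ← hrec σ b (by omega)]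
  rw [key]
  exact (measurable_word_fn _).comp (measurable_wordMap_past m)

def auxOrbit (M : MarkovSystem K N E) (j0 : N) (xp : N → K) (σ : CodeSpace E) (n : ℕ) : K :=
  if ∃ l, Tendsto (fun m => M.orbit j0 xp σ m) atTop (𝓝 l) then M.orbit j0 xp σ n else xp j0

def codeM (M : MarkovSystem K N E) (j0 : N) (xp : N → K) (σ : CodeSpace E) : K :=
  if h : ∃ l, Tendsto (fun n => auxOrbit M j0 xp σ n) atTop (𝓝 l) then h.choose else xp j0

lemma auxOrbit_exists (M : MarkovSystem K N E) (j0 : N) (xp : N → K) (σ : CodeSpace E) :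
    ∃ l, Tendsto (fun n => auxOrbit M j0 xp σ n) atTop (𝓝 l) := by
  by_cases h : ∃ l, Tendsto (fun m => M.orbit j0 xp σ m) atTop (𝓝 l)
  · obtain ⟨l, hl⟩ := h
    refine ⟨l, ?_⟩
    have heq : (fun n => auxOrbit M j0 xp σ n) = fun n => M.orbit j0 xp σ n := by
      funext n; rw [auxOrbit, if_pos ⟨l, hl⟩]
    rw [heq]; exact hl
  · refine ⟨xp j0, ?_⟩
    have heq : (fun n => auxOrbit M j0 xp σ n) = fun _ => xp j0 := by
      funext n; rw [auxOrbit, if_neg h]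
    rw [heq]; exact tendsto_const_nhds

lemma codeM_tendsto (M : MarkovSystem K N E) (j0 : N) (xp : N → K) (σ : CodeSpace E) :
    Tendsto (fun n => auxOrbit M j0 xp σ n) atTop (𝓝 (codeM M j0 xp σ)) := by
  rw [codeM, dif_pos (auxOrbit_exists M j0 xp σ)]
  exact (auxOrbit_exists M j0 xp σ).choose_spec

lemma measurable_auxOrbit_past [CompleteSpace K] (M : MarkovSystem K N E) (j0 : N) (xp : N → K)
    (n : ℕ) : Measurable[pastAlgebra E] (fun σ => auxOrbit M j0 xp σ n) := by
  letI : MeasurableSpace (CodeSpace E) := pastAlgebra E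
  exact Measurable.ite
    (measurableSet_conv (fun m σ => M.orbit j0 xp σ m)
      (fun a b => measurable_orbit_dist_past M j0 xp a b))
    (measurable_orbit_past M j0 xp n) measurable_const

lemma measurable_codeM_past [CompleteSpace K] (M : MarkovSystem K N E) (j0 : N) (xp : N → K) :
    Measurable[pastAlgebra E] (codeM M j0 xp) := by
  letI : MeasurableSpace (CodeSpace E) := pastAlgebra E
  refine measurable_of_tendsto_metrizable' atTop
    (fun n => measurable_auxOrbit_past M j0 xp n) ?_
  rw [tendsto_pi_nhds]
  intro σ
  exact codeM_tendsto M j0 xp σ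

lemma code_tendsto (M : MarkovSystem K N E) (j0 : N) (xp : N → K) {σ : CodeSpace E}
    (hσ : σ ∈ M.codeDomain j0 xp) :
    Tendsto (fun n => M.orbit j0 xp σ n) atTop (𝓝 (M.code j0 xp σ)) := by
  rw [MarkovSystem.code, dif_pos hσ]
  exact hσ.2.choose_spec

lemma codeM_eq_code (M : MarkovSystem K N E) (j0 : N) (xp : N → K) {σ : CodeSpace E}
    (hσ : σ ∈ M.codeDomain j0 xp) :
    codeM M j0 xp σ = M.code j0 xp σ := by
  have h1 := codeM_tendsto M j0 xp σ
  have h2 : (fun n => auxOrbit M j0 xp σ n) = fun n => M.orbit j0 xp σ n := by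
    funext n; rw [auxOrbit, if_pos hσ.2]
  rw [h2] at h1
  exact tendsto_nhds_unique h1 (code_tendsto M j0 xp hσ)

lemma pbar_nonneg (M : MarkovSystem K N E) (pbar : E → K → ℝ) (hpbar : M.IsUCExtensionP pbar)
    (e : E) {x : K} (hx : x ∈ closure (M.Kset (M.i e))) : 0 ≤ pbar e x := by
  obtain ⟨y, hy, hyx⟩ := mem_closure_iff_seq_limit.1 hx
  have h1 : Tendsto (fun n => pbar e (y n)) atTop (𝓝 (pbar e x)) :=
    ((hpbar e).1 x hx).tendsto.comp
      (tendsto_nhdsWithin_iff.2 ⟨hyx, .of_forall fun n => subset_closure (hy n)⟩)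
  refine ge_of_tendsto' h1 fun n => ?_
  rw [(hpbar e).2.1 _ (hy n)]
  exact M.p_nonneg e (y n)

lemma dp_nonneg (M : MarkovSystem K N E) (pbar : E → K → ℝ) (hpbar : M.IsUCExtensionP pbar)
    (e : E) (x : K) : 0 ≤ M.dp pbar e x := by
  unfold MarkovSystem.dp
  by_cases h : x ∈ closure (M.Kset (M.i e)) \ M.Kset (M.i e)
  · rw [Set.indicator_of_mem h]
    exact pbar_nonneg M pbar hpbar e h.1
  · rw [Set.indicator_of_notMem h]

lemma pbar_tsum_le_one (M : MarkovSystem K N E) (pbar : E → K → ℝ)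
    (hpbar : M.IsUCExtensionP pbar) (j : N) {x : K} (hx : x ∈ closure (M.Kset j)) :
    ∑' e : {e : E // M.i e = j}, ENNReal.ofReal (pbar e.val x) ≤ 1 := by
  obtain ⟨y, hy, hyx⟩ := mem_closure_iff_seq_limit.1 hx
  rw [ENNReal.tsum_eq_iSup_sum]
  refine iSup_le fun s => ?_
  have hterm : ∀ e : {e : E // M.i e = j},
      Tendsto (fun n => ENNReal.ofReal (M.p e.val (y n))) atTop
        (𝓝 (ENNReal.ofReal (pbar e.val x))) := by
    intro e
    have hco : ContinuousWithinAt (pbar e.val) (closure (M.Kset (M.i e.val))) x :=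
      (hpbar e.val).1 x (by rw [e.2]; exact hx)
    have h1 : Tendsto (fun n => pbar e.val (y n)) atTop (𝓝 (pbar e.val x)) :=
      hco.tendsto.comp (tendsto_nhdsWithin_iff.2
        ⟨hyx, .of_forall fun n => subset_closure (by rw [e.2]; exact hy n)⟩)
    have heq : ∀ n, pbar e.val (y n) = M.p e.val (y n) := fun n =>
      (hpbar e.val).2.1 _ (by rw [e.2]; exact hy n)
    have h2 := (ENNReal.continuous_ofReal.tendsto _).comp h1
    simpa [Function.comp_def, heq] using h2
  have hsum : Tendsto (fun n => ∑ e ∈ s, ENNReal.ofReal (M.p e.val (y n))) atTop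
      (𝓝 (∑ e ∈ s, ENNReal.ofReal (pbar e.val x))) :=
    tendsto_finset_sum s fun e _ => hterm e
  refine le_of_tendsto hsum (Eventually.of_forall fun n => ?_)
  have hsummable : Summable fun e : {e : E // M.i e = j} => M.p e.val (y n) := by
    by_contra hns
    have h0 := tsum_eq_zero_of_not_summable hns
    rw [M.p_tsum_one j _ (hy n)] at h0
    exact one_ne_zero h0
  calc ∑ e ∈ s, ENNReal.ofReal (M.p e.val (y n))
      ≤ ∑' e : {e : E // M.i e = j}, ENNReal.ofReal (M.p e.val (y n)) := ENNReal.sum_le_tsum s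
    _ = ENNReal.ofReal (∑' e : {e : E // M.i e = j}, M.p e.val (y n)) :=
        (ENNReal.ofReal_tsum_of_nonneg (fun e : {e : E // M.i e = j} => M.p_nonneg e.val (y n)) hsummable).symm
    _ = 1 := by rw [M.p_tsum_one j _ (hy n), ENNReal.ofReal_one]

lemma dp_measurable (M : MarkovSystem K N E) (pbar : E → K → ℝ)
    (hpbar : M.IsUCExtensionP pbar) (e : E) : Measurable (M.dp pbar e) := by
  classical
  have key : M.dp pbar e = fun x =>
      if h : x ∈ closure (M.Kset (M.i e)) \ M.Kset (M.i e)
      then (fun y : ↥(closure (M.Kset (M.i e)) \ M.Kset (M.i e)) => pbar e y.val) ⟨x, h⟩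
      else (fun _ : ↥(closure (M.Kset (M.i e)) \ M.Kset (M.i e))ᶜ => (0 : ℝ)) ⟨x, h⟩ := by
    funext x
    by_cases h : x ∈ closure (M.Kset (M.i e)) \ M.Kset (M.i e)
    · rw [dif_pos h]; exact Set.indicator_of_mem h _
    · rw [dif_neg h]; exact Set.indicator_of_notMem h _
  rw [key]
  have hcont : ContinuousOn (pbar e) (closure (M.Kset (M.i e)) \ M.Kset (M.i e)) :=
    (hpbar e).1.mono Set.diff_subset
  exact Measurable.dite
    (f := fun y : ↥(closure (M.Kset (M.i e)) \ M.Kset (M.i e)) => pbar e y.val)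
    hcont.restrict.measurable measurable_const
    ((isClosed_closure.measurableSet).diff (M.Kset_measurable _))

def wbm (M : MarkovSystem K N E) (wb : E → K → K) (pt : K) (e : E) (x : K) : K :=
  if x ∈ closure (M.Kset (M.i e)) then wb e x else pt

lemma wbm_eq (M : MarkovSystem K N E) (wb : E → K → K) (pt : K) (e : E) {x : K}
    (hx : x ∈ closure (M.Kset (M.i e))) : wbm M wb pt e x = wb e x := if_pos hx

lemma wbm_measurable (M : MarkovSystem K N E) (wb : E → K → K) (hwb : M.IsUCExtensionW wb)
    (pt : K) (e : E) : Measurable (wbm M wb pt e) := by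
  classical
  have key : wbm M wb pt e = fun x =>
      if h : x ∈ closure (M.Kset (M.i e))
      then (fun y : ↥(closure (M.Kset (M.i e))) => wb e y.val) ⟨x, h⟩
      else (fun _ : ↥(closure (M.Kset (M.i e)))ᶜ => pt) ⟨x, h⟩ := by
    funext x
    by_cases h : x ∈ closure (M.Kset (M.i e))
    · rw [dif_pos h]; exact if_pos h
    · rw [dif_neg h]; exact if_neg h
  rw [key]
  exact Measurable.dite ((hwb e).1.restrict.measurable) measurable_const
    isClosed_closure.measurableSet

lemma Rop_eq (M : MarkovSystem K N E) (pbar : E → K → ℝ) (wb : E → K → K) (pt : K)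
    (f : K → ℝ≥0∞) :
    M.Rop pbar wb f = fun x =>
      ∑' e : E, ENNReal.ofReal (M.dp pbar e x) * f (wbm M wb pt e x) := by
  funext x
  unfold MarkovSystem.Rop
  refine tsum_congr fun e => ?_
  by_cases h : x ∈ closure (M.Kset (M.i e))
  · rw [wbm_eq M wb pt e h]
  · have h0 : M.dp pbar e x = 0 := Set.indicator_of_notMem (fun hx => h hx.1) _
    rw [h0]
    simp

lemma measurable_Rop (M : MarkovSystem K N E) (pbar : E → K → ℝ) (wb : E → K → K)
    (hpbar : M.IsUCExtensionP pbar) (hwb : M.IsUCExtensionW wb) (pt : K)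
    {f : K → ℝ≥0∞} (hf : Measurable f) : Measurable (M.Rop pbar wb f) := by
  rw [Rop_eq M pbar wb pt f]
  exact Measurable.ennreal_tsum fun e =>
    ((dp_measurable M pbar hpbar e).ennreal_ofReal).mul (hf.comp (wbm_measurable M wb hwb pt e))

lemma measurable_Rop_iter (M : MarkovSystem K N E) (pbar : E → K → ℝ) (wb : E → K → K)
    (hpbar : M.IsUCExtensionP pbar) (hwb : M.IsUCExtensionW wb) (pt : K) (n : ℕ) :
    Measurable ((M.Rop pbar wb)^[n] (fun _ => (1 : ℝ≥0∞))) := by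
  induction n with
  | zero => exact measurable_const
  | succ n ih =>
      rw [Function.iterate_succ_apply']
      exact measurable_Rop M pbar wb hpbar hwb pt ih

lemma iterW_mem (M : MarkovSystem K N E) (j0 : N) {σ : CodeSpace E} (hσ : σ ∈ M.pathSpace) :
    ∀ (n : ℕ) (y : K), y ∈ M.Kset (M.iext j0 (σ (-(n : ℤ)))) →
      M.iterW σ n y ∈ M.Kset (M.text j0 (σ 0))
  | 0, y, hy => by
      obtain ⟨e, e', h0, h1, hie⟩ := hσ 0
      simp only [MarkovSystem.iterW]
      rw [show (-((0 : ℕ) : ℤ)) = (0 : ℤ) by norm_num] at hy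
      rw [h0] at hy ⊢
      exact M.w_mapsTo e hy
  | (n+1), y, hy => by
      obtain ⟨e, e', ha, hb, hie⟩ := hσ (-((n : ℤ) + 1))
      simp only [MarkovSystem.iterW]
      refine iterW_mem M j0 hσ n _ ?_
      rw [show (-(((n+1) : ℕ) : ℤ)) = (-((n : ℤ) + 1)) by push_cast; ring] at hy
      rw [ha] at hy
      rw [show (-((n : ℤ) + 1) + 1) = -((n : ℕ) : ℤ) by push_cast; ring] at hb
      rw [ha, hb]
      show M.w e y ∈ M.Kset (M.i e')
      rw [hie]
      exact M.w_mapsTo e hy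

lemma orbit_mem (M : MarkovSystem K N E) (j0 : N) (xp : N → K) (hxp : ∀ j, xp j ∈ M.Kset j)
    {σ : CodeSpace E} (hσ : σ ∈ M.pathSpace) (n : ℕ) :
    M.orbit j0 xp σ n ∈ M.Kset (M.text j0 (σ 0)) := by
  refine iterW_mem M j0 hσ n _ ?_
  obtain ⟨e, e', he, -⟩ := hσ (-(n : ℤ))
  rw [he]
  exact hxp _

lemma code_mem_closure (M : MarkovSystem K N E) (j0 : N) (xp : N → K) (hxp : ∀ j, xp j ∈ M.Kset j)
    {σ : CodeSpace E} (hσ : σ ∈ M.codeDomain j0 xp) :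
    M.code j0 xp σ ∈ closure (M.Kset (M.text j0 (σ 0))) :=
  mem_closure_of_tendsto (code_tendsto M j0 xp hσ)
    (Eventually.of_forall fun n => orbit_mem M j0 xp hxp hσ.1 n)

lemma shift_iterW (M : MarkovSystem K N E) (σ : CodeSpace E) :
    ∀ (m : ℕ) (y : K), M.iterW (shiftMap E σ) (m + 1) y = M.wext (σ 1) (M.iterW σ m y)
  | 0, y => by
      simp only [MarkovSystem.iterW, shiftMap]
      norm_num
  | (m+1), y => by
      have harg : shiftMap E σ (-((((m+1) : ℕ) : ℤ) + 1)) = σ (-(((m : ℕ) : ℤ) + 1)) := by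
        show σ ((-((((m+1) : ℕ) : ℤ) + 1)) + 1) = σ (-(((m : ℕ) : ℤ) + 1))
        congr 1 <;> omega
      show M.iterW (shiftMap E σ) (m+1) (M.wext (shiftMap E σ (-((((m+1):ℕ) : ℤ) + 1))) y)
        = M.wext (σ 1) (M.iterW σ m (M.wext (σ (-(((m : ℕ) : ℤ) + 1))) y))
      rw [harg, shift_iterW M σ m]

lemma shift_orbit (M : MarkovSystem K N E) (j0 : N) (xp : N → K) (σ : CodeSpace E) (m : ℕ) :
    M.orbit j0 xp (shiftMap E σ) (m + 1) = M.wext (σ 1) (M.orbit j0 xp σ m) := by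
  unfold MarkovSystem.orbit
  rw [shift_iterW]
  have harg : shiftMap E σ (-(((m+1) : ℕ) : ℤ)) = σ (-((m : ℕ) : ℤ)) := by
    show σ ((-(((m+1) : ℕ) : ℤ)) + 1) = σ (-((m : ℕ) : ℤ))
    congr 1 <;> omega
  rw [harg]

lemma shift_pathSpace (M : MarkovSystem K N E) {σ : CodeSpace E} (hσ : σ ∈ M.pathSpace) :
    shiftMap E σ ∈ M.pathSpace := by
  intro n
  obtain ⟨e, e', h1, h2, h3⟩ := hσ (n + 1)
  exact ⟨e, e', h1, h2, h3⟩

lemma shift_mem_domain (M : MarkovSystem K N E) (j0 : N) (xp : N → K)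
    (hxp : ∀ j, xp j ∈ M.Kset j) (wb : E → K → K) (hwb : M.IsUCExtensionW wb)
    {σ : CodeSpace E} (hσ : σ ∈ M.codeDomain j0 xp) {e : E} (he : σ 1 = some e) :
    shiftMap E σ ∈ M.codeDomain j0 xp ∧
      M.code j0 xp (shiftMap E σ) = wb e (M.code j0 xp σ) := by
  have hpath : σ ∈ M.pathSpace := hσ.1
  obtain ⟨e0, e1, h0, h1, hie⟩ := hpath 0
  rw [show (0 : ℤ) + 1 = 1 by norm_num, he] at h1
  have he1 : e = e1 := by injection h1
  subst he1
  have htext : M.text j0 (σ 0) = M.t e0 := by rw [h0]; rfl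
  have hmem : ∀ n, M.orbit j0 xp σ n ∈ M.Kset (M.i e) := by
    intro n
    rw [hie]
    have := orbit_mem M j0 xp hxp hpath n
    rwa [htext] at this
  have hclos : M.code j0 xp σ ∈ closure (M.Kset (M.i e)) := by
    rw [hie]
    have := code_mem_closure M j0 xp hxp hσ
    rwa [htext] at this
  have hw : Tendsto (fun n => wb e (M.orbit j0 xp σ n)) atTop (𝓝 (wb e (M.code j0 xp σ))) :=
    ((hwb e).1 _ hclos).tendsto.comp
      (tendsto_nhdsWithin_iff.2 ⟨code_tendsto M j0 xp hσ,
        .of_forall fun n => subset_closure (hmem n)⟩)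
  have horb : ∀ n, M.orbit j0 xp (shiftMap E σ) (n + 1) = wb e (M.orbit j0 xp σ n) := by
    intro n
    rw [shift_orbit M j0 xp σ n, he]
    exact ((hwb e).2 _ (hmem n)).symm
  have htendS : Tendsto (fun n => M.orbit j0 xp (shiftMap E σ) n) atTop
      (𝓝 (wb e (M.code j0 xp σ))) := by
    rw [← Filter.tendsto_add_atTop_iff_nat 1]
    have : (fun n => M.orbit j0 xp (shiftMap E σ) (n + 1))
        = fun n => wb e (M.orbit j0 xp σ n) := funext horb
    rw [this]
    exact hw
  have hSdom : shiftMap E σ ∈ M.codeDomain j0 xp :=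
    ⟨shift_pathSpace M hpath, ⟨_, htendS⟩⟩
  exact ⟨hSdom, tendsto_nhds_unique (code_tendsto M j0 xp hSdom) htendS⟩

end AuxPerp


variable {K : Type*} [MetricSpace K] [CompleteSpace K] [MeasurableSpace K] [BorelSpace K]
  {N E : Type*} [Countable N] [Countable E]

/-- If `M` is uniformly continuous and `Λ ∈ E_⊥(M)`, then `F(Λ)(Ω) = 1`. -/
theorem perp_pushforward_concentrated_on_Omega
    (M : MarkovSystem K N E) (j0 : N) (xp : N → K) (hxp : ∀ j, xp j ∈ M.Kset j)
    (huc : M.IsUniformlyContinuous)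
    (pbar : E → K → ℝ) (hpbar : M.IsUCExtensionP pbar)
    (wb : E → K → K) (hwb : M.IsUCExtensionW wb)
    (Λ : Measure (CodeSpace E)) (hΛ : M.IsPerp j0 xp pbar Λ) :
    Measure.map (M.code j0 xp) Λ (M.OmegaSet pbar wb) = 1 := by
  classical
  obtain ⟨hprob, hshift, hD, hce⟩ := hΛ
  haveI := hprob
  have hm : pastAlgebra E ≤ (inferInstance : MeasurableSpace (CodeSpace E)) := pastAlgebra_le
  haveI : SigmaFinite (Λ.trim hm) := by
    haveI : IsFiniteMeasure (Λ.trim hm) := isFiniteMeasure_trim hm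
    infer_instance
  -- measurability of the coding domain and the measurable coding map `codeM`
  have hDmeas : MeasurableSet (M.codeDomain j0 xp) := by
    have hsplit : M.codeDomain j0 xp = M.pathSpace ∩
        {σ | ∃ l, Tendsto (fun n => M.orbit j0 xp σ n) atTop (𝓝 l)} := rfl
    rw [hsplit]
    exact (measurableSet_pathSpace M).inter
      (measurableSet_conv (fun n σ => M.orbit j0 xp σ n)
        (fun a b => (measurable_orbit_dist_past M j0 xp a b).mono hm le_rfl))
  have hFm_past : Measurable[pastAlgebra E] (codeM M j0 xp) := measurable_codeM_past M j0 xp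
  have hFm_meas : Measurable (codeM M j0 xp) := hFm_past.mono hm le_rfl
  have hDae : ∀ᵐ σ ∂Λ, σ ∈ M.codeDomain j0 xp := by
    rw [ae_iff]
    have hcompl : {σ : CodeSpace E | ¬ σ ∈ M.codeDomain j0 xp} = (M.codeDomain j0 xp)ᶜ := rfl
    rw [hcompl, measure_compl hDmeas (measure_ne_top Λ _), hD, measure_univ, tsub_self]
  have hFmF : ∀ᵐ σ ∂Λ, codeM M j0 xp σ = M.code j0 xp σ :=
    hDae.mono fun σ h => codeM_eq_code M j0 xp h
  have hFaem : AEMeasurable (M.code j0 xp) Λ := hFm_meas.aemeasurable.congr hFmF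
  -- the measurable variant `T'` of the target sets, and of the conditional expectations
  set T' : N → Set (CodeSpace E) := fun j =>
    ⋃ (e0 : E) (_ : M.t e0 = j), {σ : CodeSpace E | σ 0 = some e0} with hT'
  have hT'past : ∀ j, MeasurableSet[pastAlgebra E] (T' j) := fun j =>
    MeasurableSet.iUnion fun e0 => MeasurableSet.iUnion fun _ =>
      measurableSet_coord_past le_rfl (some e0)
  have hT'meas : ∀ j, MeasurableSet (T' j) := fun j => hm _ (hT'past j)
  have hT'mem : ∀ (j : N) (σ : CodeSpace E), σ ∈ T' j ↔ ∃ e0, M.t e0 = j ∧ σ 0 = some e0 := by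
    intro j σ
    simp [hT']
  have hTsetT' : ∀ (j : N) {σ : CodeSpace E}, σ ∈ M.pathSpace → (σ ∈ M.Tset j ↔ σ ∈ T' j) := by
    intro j σ hσ
    constructor
    · rintro ⟨-, e0, h0, ht⟩
      exact (hT'mem j σ).2 ⟨e0, ht, h0⟩
    · intro h
      obtain ⟨e0, ht, h0⟩ := (hT'mem j σ).1 h
      exact ⟨hσ, e0, h0, ht⟩
  set hme : E → CodeSpace E → ℝ := fun e =>
    (T' (M.i e)).indicator (fun σ => M.dp pbar e (codeM M j0 xp σ)) with hhme
  have hme_meas : ∀ e, Measurable (hme e) := fun e =>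
    ((dp_measurable M pbar hpbar e).comp hFm_meas).indicator (hT'meas _)
  have hme_nonneg : ∀ e σ, 0 ≤ hme e σ := fun e σ =>
    Set.indicator_nonneg (fun τ _ => dp_nonneg M pbar hpbar e (codeM M j0 xp τ)) σ
  have hφae : ∀ e : E,
      (Λ[Set.indicator {σ : CodeSpace E | σ 1 = some e} (fun _ => (1 : ℝ)) | pastAlgebra E])
        =ᵐ[Λ] hme e := by
    intro e
    refine (hce e).trans ?_
    filter_upwards [hDae, hFmF] with σ hσD hσF
    by_cases h : σ ∈ M.Tset (M.i e)
    · rw [Set.indicator_of_mem h]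
      simp only [hhme]
      rw [Set.indicator_of_mem ((hTsetT' _ hσD.1).1 h), hσF]
    · rw [Set.indicator_of_notMem h]
      simp only [hhme]
      rw [Set.indicator_of_notMem (fun hc => h ((hTsetT' _ hσD.1).2 hc))]
  have hAmeas : ∀ e : E, MeasurableSet {σ : CodeSpace E | σ 1 = some e} := fun e =>
    measurableSet_coordSet 1 (some e)
  have hint : ∀ e : E,
      Integrable (Set.indicator {σ : CodeSpace E | σ 1 = some e} (fun _ => (1 : ℝ))) Λ :=
    fun e => (integrable_const (1 : ℝ)).indicator (hAmeas e)
  have hlint : ∀ e : E, ∫⁻ σ, ENNReal.ofReal (hme e σ) ∂Λ = Λ {σ | σ 1 = some e} := by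
    intro e
    have h1 : ∫⁻ σ, ENNReal.ofReal (hme e σ) ∂Λ
        = ∫⁻ σ, ENNReal.ofReal
            ((Λ[Set.indicator {σ : CodeSpace E | σ 1 = some e} (fun _ => (1 : ℝ)) |
              pastAlgebra E]) σ) ∂Λ := by
      refine lintegral_congr_ae ?_
      filter_upwards [hφae e] with σ h
      rw [h]
    have hnn : 0 ≤ᵐ[Λ]
        (Λ[Set.indicator {σ : CodeSpace E | σ 1 = some e} (fun _ => (1 : ℝ)) |
          pastAlgebra E]) := by
      filter_upwards [hφae e] with σ h
      rw [h]; exact hme_nonneg e σ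
    rw [h1, ← ofReal_integral_eq_lintegral_ofReal integrable_condExp hnn,
      integral_condExp hm, integral_indicator_const (1 : ℝ) (hAmeas e),
      smul_eq_mul, mul_one, measureReal_def, ENNReal.ofReal_toReal (measure_ne_top Λ _)]
  have hsumA : ∑' e : E, Λ {σ : CodeSpace E | σ 1 = some e} = 1 := by
    have hdisj : Pairwise (Function.onFun Disjoint
        fun e : E => {σ : CodeSpace E | σ 1 = some e}) := by
      intro a b hab
      simp only [Function.onFun]
      rw [Set.disjoint_left]
      intro σ ha hb
      rw [Set.mem_setOf_eq] at ha hb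
      rw [ha] at hb
      exact hab (by injection hb)
    rw [← measure_iUnion hdisj hAmeas]
    refine le_antisymm prob_le_one ?_
    rw [← hD]
    refine measure_mono fun σ hσ => ?_
    obtain ⟨e, e', h1, -, -⟩ := hσ.1 1
    exact Set.mem_iUnion.2 ⟨e, h1⟩
  set G : CodeSpace E → ℝ≥0∞ := fun σ => ∑' e : E, ENNReal.ofReal (hme e σ) with hG
  have hGmeas : Measurable G := Measurable.ennreal_tsum fun e => (hme_meas e).ennreal_ofReal
  have hGint : ∫⁻ σ, G σ ∂Λ = 1 := by
    simp only [hG]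
    rw [lintegral_tsum fun e => ((hme_meas e).ennreal_ofReal).aemeasurable]
    exact (tsum_congr fun e => hlint e).trans hsumA
  have hGle : ∀ᵐ σ ∂Λ, G σ ≤ 1 := by
    filter_upwards [hDae, hFmF] with σ hσD hσF
    obtain ⟨e0, e1, h0, -, -⟩ := hσD.1 0
    have hclos : codeM M j0 xp σ ∈ closure (M.Kset (M.t e0)) := by
      rw [hσF]
      have hcc := code_mem_closure M j0 xp hxp hσD
      rwa [show M.text j0 (σ 0) = M.t e0 by rw [h0]; rfl] at hcc
    have hbound : ∀ e : E, ENNReal.ofReal (hme e σ)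
        ≤ Set.indicator {e : E | M.i e = M.t e0}
            (fun e => ENNReal.ofReal (pbar e (codeM M j0 xp σ))) e := by
      intro e
      by_cases hie : M.i e = M.t e0
      · rw [Set.indicator_of_mem (show e ∈ {e : E | M.i e = M.t e0} from hie)]
        simp only [hhme]
        by_cases hT : σ ∈ T' (M.i e)
        · rw [Set.indicator_of_mem hT]
          refine ENNReal.ofReal_le_ofReal ?_
          unfold MarkovSystem.dp
          by_cases hd : codeM M j0 xp σ ∈ closure (M.Kset (M.i e)) \ M.Kset (M.i e)
          · rw [Set.indicator_of_mem hd]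
          · rw [Set.indicator_of_notMem hd]
            exact pbar_nonneg M pbar hpbar e (by rw [hie]; exact hσF ▸ hclos)
        · rw [Set.indicator_of_notMem hT]
          simp
      · have hnT : σ ∉ T' (M.i e) := by
          intro hc
          obtain ⟨ee, ht, h00⟩ := (hT'mem _ σ).1 hc
          rw [h0] at h00
          have hee : ee = e0 := by injection h00.symm
          exact hie (by rw [← ht, hee])
        rw [Set.indicator_of_notMem (show ¬ e ∈ {e : E | M.i e = M.t e0} from hie)]
        simp only [hhme]
        rw [Set.indicator_of_notMem hnT]
        simp
    calc G σ ≤ ∑' e : E, Set.indicator {e : E | M.i e = M.t e0}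
          (fun e => ENNReal.ofReal (pbar e (codeM M j0 xp σ))) e := ENNReal.tsum_le_tsum hbound
      _ = ∑' e : ↥{e : E | M.i e = M.t e0},
            ENNReal.ofReal (pbar e.val (codeM M j0 xp σ)) := (tsum_subtype _ _).symm
      _ ≤ 1 := pbar_tsum_le_one M pbar hpbar (M.t e0) (hσF ▸ hclos)
  have hGge : ∀ᵐ σ ∂Λ, 1 ≤ G σ := by
    have hsub : ∫⁻ σ, ((fun _ => (1 : ℝ≥0∞)) σ - G σ) ∂Λ = 0 := by
      rw [lintegral_sub hGmeas (by rw [hGint]; exact ENNReal.one_ne_top) hGle, hGint,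
        lintegral_one, measure_univ, tsub_self]
    have h0 : (fun σ => (1 : ℝ≥0∞) - G σ) =ᵐ[Λ] 0 :=
      (lintegral_eq_zero_iff (measurable_const.sub hGmeas)).1 hsub
    filter_upwards [h0] with σ h
    have h' : (1 : ℝ≥0∞) - G σ = 0 := h
    exact tsub_eq_zero_iff_le.1 h'
  -- the key induction
  have hkey : ∀ n : ℕ, ∀ᵐ σ ∂Λ,
      1 ≤ (M.Rop pbar wb)^[n] (fun _ => (1 : ℝ≥0∞)) (codeM M j0 xp σ) := by
    intro n
    induction n with
    | zero => exact Eventually.of_forall fun σ => by simp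
    | succ n ih =>
      set B : Set (CodeSpace E) :=
        {σ | ¬ 1 ≤ (M.Rop pbar wb)^[n] (fun _ => (1 : ℝ≥0∞)) (codeM M j0 xp σ)} with hB
      have hBmeas : MeasurableSet B := by
        have hBeq : B = {σ | (M.Rop pbar wb)^[n] (fun _ => (1 : ℝ≥0∞)) (codeM M j0 xp σ) < 1} := by
          ext σ; simp [hB, not_le]
        rw [hBeq]
        exact ((measurable_Rop_iter M pbar wb hpbar hwb (xp j0) n).comp hFm_meas)
          measurableSet_Iio
      have hBnull : Λ B = 0 := ae_iff.1 ih
      have hSB : Λ (shiftMap E ⁻¹' B) = 0 := by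
        have happ : Λ (shiftMap E ⁻¹' B) = Measure.map (shiftMap E) Λ B :=
          (Measure.map_apply measurable_shiftMap hBmeas).symm
        rw [happ, hshift]
        exact hBnull
      have hSBae : ∀ᵐ σ ∂Λ,
          1 ≤ (M.Rop pbar wb)^[n] (fun _ => (1 : ℝ≥0∞)) (codeM M j0 xp (shiftMap E σ)) := by
        have hae := measure_eq_zero_iff_ae_notMem.1 hSB
        filter_upwards [hae] with σ hσ
        by_contra hc
        exact hσ hc
      have hdagger : ∀ e : E, ∀ᵐ σ ∂Λ,
          ¬ (0 < (Λ[Set.indicator {σ : CodeSpace E | σ 1 = some e} (fun _ => (1 : ℝ)) |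
                pastAlgebra E]) σ ∧
             (M.Rop pbar wb)^[n] (fun _ => (1 : ℝ≥0∞))
               (wbm M wb (xp j0) e (codeM M j0 xp σ)) < 1) := by
        intro e
        set φ := Λ[Set.indicator {σ : CodeSpace E | σ 1 = some e} (fun _ => (1 : ℝ)) |
          pastAlgebra E] with hφdef
        set C : Set (CodeSpace E) := {σ | 0 < φ σ ∧
          (M.Rop pbar wb)^[n] (fun _ => (1 : ℝ≥0∞))
            (wbm M wb (xp j0) e (codeM M j0 xp σ)) < 1} with hCdef
        have hCpast : MeasurableSet[pastAlgebra E] C := by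
          letI : MeasurableSpace (CodeSpace E) := pastAlgebra E
          have hc1 : MeasurableSet {σ : CodeSpace E | 0 < φ σ} :=
            measurableSet_lt measurable_const stronglyMeasurable_condExp.measurable
          have hc2 : MeasurableSet {σ : CodeSpace E |
              (M.Rop pbar wb)^[n] (fun _ => (1 : ℝ≥0∞))
                (wbm M wb (xp j0) e (codeM M j0 xp σ)) < 1} :=
            (((measurable_Rop_iter M pbar wb hpbar hwb (xp j0) n).comp
              (wbm_measurable M wb hwb (xp j0) e)).comp hFm_past) measurableSet_Iio
          exact hc1.inter hc2
        have hACnull : Λ ({σ : CodeSpace E | σ 1 = some e} ∩ C) = 0 := by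
          rw [measure_eq_zero_iff_ae_notMem]
          filter_upwards [hDae, hFmF, hφae e, hSBae] with σ hσD hσF hφe hSB1
          rintro ⟨hA, hφpos, hRlt⟩
          rw [hφdef] at hφpos
          rw [hφe] at hφpos
          simp only [hhme] at hφpos
          by_cases hT : σ ∈ T' (M.i e)
          case neg => rw [Set.indicator_of_notMem hT] at hφpos; exact lt_irrefl _ hφpos
          rw [Set.indicator_of_mem hT] at hφpos
          have hdmem : codeM M j0 xp σ ∈ closure (M.Kset (M.i e)) := by
            by_contra hc
            rw [MarkovSystem.dp, Set.indicator_of_notMem (fun hx => hc hx.1)] at hφpos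
            exact lt_irrefl _ hφpos
          have hA' : σ 1 = some e := hA
          obtain ⟨hSdom, hcodeS⟩ := shift_mem_domain M j0 xp hxp wb hwb hσD hA'
          have h1 : codeM M j0 xp (shiftMap E σ) = wb e (M.code j0 xp σ) := by
            rw [codeM_eq_code M j0 xp hSdom]
            exact hcodeS
          have h2 : wbm M wb (xp j0) e (codeM M j0 xp σ) = codeM M j0 xp (shiftMap E σ) := by
            rw [wbm_eq M wb (xp j0) e hdmem, hσF, h1]
          rw [h2] at hRlt
          exact absurd hSB1 (not_le.2 hRlt)
        have hCnull : Λ C = 0 := by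
          by_contra hne
          have hpos : 0 < Λ C := pos_iff_ne_zero.2 hne
          have hintC : ∫ σ in C,
              (Set.indicator {σ : CodeSpace E | σ 1 = some e} (fun _ => (1 : ℝ))) σ ∂Λ
              = ∫ σ in C, φ σ ∂Λ := (setIntegral_condExp hm (hint e) hCpast).symm
          have hLHS : ∫ σ in C,
              (Set.indicator {σ : CodeSpace E | σ 1 = some e} (fun _ => (1 : ℝ))) σ ∂Λ = 0 := by
            rw [integral_indicator_const (1 : ℝ) (hAmeas e), measureReal_def, Measure.restrict_apply (hAmeas e),
              hACnull]
            simp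
          have hnnr : 0 ≤ᵐ[Λ.restrict C] φ := by
            refine ae_restrict_of_ae ((hφae e).mono fun σ h => ?_)
            simp only [Pi.zero_apply, hφdef]
            rw [h]
            exact hme_nonneg e σ
          have hRHS : 0 < ∫ σ in C, φ σ ∂Λ := by
            rw [setIntegral_pos_iff_support_of_nonneg_ae hnnr integrable_condExp.integrableOn]
            have hsubC : C ⊆ Function.support φ := fun σ hσ => ne_of_gt hσ.1
            rw [Set.inter_eq_right.mpr hsubC]
            exact hpos
          rw [hintC] at hLHS
          rw [hLHS] at hRHS
          exact lt_irrefl _ hRHS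
        exact measure_eq_zero_iff_ae_notMem.1 hCnull
      -- assemble the inductive step
      filter_upwards [hGge, ae_all_iff.2 hdagger, ae_all_iff.2 hφae] with σ hG1 hdag hφ
      have hiter : (M.Rop pbar wb)^[n + 1] (fun _ => (1 : ℝ≥0∞)) (codeM M j0 xp σ)
          = M.Rop pbar wb ((M.Rop pbar wb)^[n] (fun _ => (1 : ℝ≥0∞))) (codeM M j0 xp σ) := by
        rw [Function.iterate_succ_apply']
      rw [hiter, Rop_eq M pbar wb (xp j0)]
      refine le_trans hG1 ?_
      refine ENNReal.tsum_le_tsum fun e => ?_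
      by_cases hpos : 0 < hme e σ
      · have h1 : 1 ≤ (M.Rop pbar wb)^[n] (fun _ => (1 : ℝ≥0∞))
            (wbm M wb (xp j0) e (codeM M j0 xp σ)) := by
          by_contra hc
          rw [not_le] at hc
          exact hdag e ⟨by rw [hφ e]; exact hpos, hc⟩
        have h2 : hme e σ ≤ M.dp pbar e (codeM M j0 xp σ) := by
          simp only [hhme]
          exact Set.indicator_le_self'
            (fun τ _ => dp_nonneg M pbar hpbar e (codeM M j0 xp τ)) σ
        calc ENNReal.ofReal (hme e σ)
            ≤ ENNReal.ofReal (M.dp pbar e (codeM M j0 xp σ)) := ENNReal.ofReal_le_ofReal h2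
          _ = ENNReal.ofReal (M.dp pbar e (codeM M j0 xp σ)) * 1 := (mul_one _).symm
          _ ≤ _ := mul_le_mul_right h1 _
      · have h0 : hme e σ = 0 := le_antisymm (not_lt.1 hpos) (hme_nonneg e σ)
        rw [h0]
        simp
  -- conclusion
  have hmain : ∀ᵐ σ ∂Λ, M.code j0 xp σ ∈ M.OmegaSet pbar wb := by
    filter_upwards [ae_all_iff.2 hkey, hFmF] with σ h1 h2
    refine Set.mem_iInter.2 fun n => ?_
    show 1 ≤ (M.Rop pbar wb)^[n + 1] (fun _ => (1 : ℝ≥0∞)) (M.code j0 xp σ)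
    rw [← h2]
    exact h1 (n + 1)
  haveI : IsProbabilityMeasure (Measure.map (M.code j0 xp) Λ) := Measure.isProbabilityMeasure_map hFaem
  refine le_antisymm prob_le_one ?_
  have hpre : (1 : ℝ≥0∞) ≤ Λ ((M.code j0 xp) ⁻¹' (M.OmegaSet pbar wb)) := by
    have hcompl : Λ (((M.code j0 xp) ⁻¹' (M.OmegaSet pbar wb))ᶜ) = 0 := by
      rw [measure_eq_zero_iff_ae_notMem]
      filter_upwards [hmain] with σ h
      exact fun hc => hc h
    have hle := measure_union_le (μ := Λ) ((M.code j0 xp) ⁻¹' (M.OmegaSet pbar wb))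
      (((M.code j0 xp) ⁻¹' (M.OmegaSet pbar wb))ᶜ)
    rw [Set.union_compl_self, measure_univ, hcompl, add_zero] at hle
    exact hle
  exact le_trans hpre (Measure.le_map_apply hFaem _)
end

section
/- Suppose M has a dominating Markov chain and p_e|_{K_{i(e)}} is uniformly continuous for every e ∈ E. Then for every j ∈ N, Σ_{e∈E, i(e)=j} p̄_e(x) = 1_{cl(K_j)}(x) for all x ∈ K, i.e. the continuous extensions of the probability functions with source j sum to the indicator of the closure of K_j. -/
open MeasureTheory Filter Topology
open scoped ENNReal NNReal Classical

variable {K : Type*} [MetricSpace K] [CompleteSpace K] [MeasurableSpace K] [BorelSpace K]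
  {N E : Type*} [Countable N] [Countable E]

/-- If `M` has a dominating Markov chain and each `p_e|_{K_{i(e)}}` is
uniformly continuous, then for every `j ∈ N` and `x ∈ K`,
`∑_{e, i(e) = j} p̄_e(x) = 1_{cl(K_j)}(x)`. -/
theorem tsum_pbar_eq_indicator_closure
    (M : MarkovSystem K N E) (j0 : N) (xp : N → K) (hxp : ∀ j, xp j ∈ M.Kset j)
    (hdom : M.HasDominatingChain)
    (hp : ∀ e : E, UniformContinuousOn (M.p e) (M.Kset (M.i e)))
    (pbar : E → K → ℝ) (hpbar : M.IsUCExtensionP pbar) (j : N) (x : K) :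
    (∑' e : {e : E // M.i e = j}, pbar e.val x) =
      if x ∈ closure (M.Kset j) then 1 else 0 := by
  by_cases hx : x ∈ closure (M.Kset j)
  · rw [if_pos hx]
    obtain ⟨u, hu, hul⟩ := mem_closure_iff_seq_limit.mp hx
    have hxi := hdom j
    set g : {e : E // M.i e = j} → ℝ≥0∞ :=
      fun e => ⨆ y ∈ M.Kset j, ENNReal.ofReal (M.p e.val y) with hg
    have hg_ne : ∀ e, g e ≠ ⊤ := fun e => ne_top_of_le_ne_top hxi (ENNReal.le_tsum e)
    have hsum : Summable fun e : {e : E // M.i e = j} => (g e).toReal :=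
      ENNReal.summable_toReal hxi
    have hbound : ∀ (n : ℕ) (e : {e : E // M.i e = j}),
        ‖M.p e.val (u n)‖ ≤ (g e).toReal := by
      intro n e
      rw [Real.norm_of_nonneg (M.p_nonneg _ _)]
      have h1 : ENNReal.ofReal (M.p e.val (u n)) ≤ g e := by
        rw [hg]; exact le_biSup (fun y => ENNReal.ofReal (M.p e.val y)) (hu n)
      calc M.p e.val (u n) = (ENNReal.ofReal (M.p e.val (u n))).toReal :=
            (ENNReal.toReal_ofReal (M.p_nonneg _ _)).symm
        _ ≤ (g e).toReal := ENNReal.toReal_mono (hg_ne e) h1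
    have hten : Tendsto u atTop (𝓝[closure (M.Kset j)] x) :=
      tendsto_nhdsWithin_of_tendsto_nhds_of_eventually_within _ hul
        (Eventually.of_forall fun n => subset_closure (hu n))
    have hpt : ∀ e : {e : E // M.i e = j},
        Tendsto (fun n => M.p e.val (u n)) atTop (𝓝 (pbar e.val x)) := by
      intro e
      have hmem : ∀ y, y ∈ M.Kset j → y ∈ M.Kset (M.i e.val) := fun y hy => by
        rw [e.prop]; exact hy
      have hx' : x ∈ closure (M.Kset (M.i e.val)) := by rw [e.prop]; exact hx
      have hc : ContinuousWithinAt (pbar e.val) (closure (M.Kset (M.i e.val))) x :=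
        (hpbar e.val).1.continuousWithinAt hx'
      have hten' : Tendsto u atTop (𝓝[closure (M.Kset (M.i e.val))] x) := by
        rw [e.prop]; exact hten
      have h2 : Tendsto (fun n => pbar e.val (u n)) atTop (𝓝 (pbar e.val x)) :=
        hc.tendsto.comp hten'
      exact h2.congr fun n => (hpbar e.val).2.1 (u n) (hmem _ (hu n))
    have hT := tendsto_tsum_of_dominated_convergence hsum hpt (Eventually.of_forall hbound)
    have hone : ∀ n : ℕ, (∑' e : {e : E // M.i e = j}, M.p e.val (u n)) = 1 :=
      fun n => M.p_tsum_one j (u n) (hu n)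
    have hconst : Tendsto (fun _ : ℕ => (1 : ℝ)) atTop
        (𝓝 (∑' e : {e : E // M.i e = j}, pbar e.val x)) := by
      simpa [hone] using hT
    exact (tendsto_nhds_unique tendsto_const_nhds hconst).symm
  · rw [if_neg hx]
    have hz : ∀ e : {e : E // M.i e = j}, pbar e.val x = 0 := fun e =>
      (hpbar e.val).2.2 x (by rw [e.prop]; exact hx)
    calc (∑' e : {e : E // M.i e = j}, pbar e.val x)
        = ∑' _ : {e : E // M.i e = j}, (0 : ℝ) := tsum_congr hz
      _ = 0 := tsum_zero
end

section
/- If M has a dominating Markov chain with c < ∞, then for every x_0 ∈ K the sequence of probability measures (α^{x_0}_n)_{n∈ℕ} on N given by α^{x_0}_n({j}) := (1/n)·Σ_{k=1}^n ((U*)^k δ_{x_0})(K_j) is uniformly tight, i.e. for every ε > 0 there exists a finite set V ⊂ N with α^{x_0}_n(N\V) < ε for all n ∈ ℕ. -/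
open MeasureTheory Filter Topology
open scoped ENNReal NNReal Classical

variable {K : Type*} [MetricSpace K] [CompleteSpace K] [MeasurableSpace K] [BorelSpace K]
  {N E : Type*} [Countable N] [Countable E]

namespace ConditionTAux

variable (M : MarkovSystem K N E)

lemma mem_Kset_exists (x : K) : ∃ j, x ∈ M.Kset j := by
  have hx : x ∈ ⋃ j, M.Kset j := M.Kset_cover ▸ Set.mem_univ x
  simpa using hx

lemma p_zero_of_ne {x : K} {j : N} (hj : x ∈ M.Kset j) {e : E} (hne : M.i e ≠ j) :
    M.p e x = 0 := by
  refine M.p_zero_outside e x fun hx => ?_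
  exact Set.disjoint_left.mp (M.Kset_disjoint hne) hx hj

lemma tsum_ofReal_p (x : K) : ∑' e : E, ENNReal.ofReal (M.p e x) = 1 := by
  obtain ⟨j, hj⟩ := mem_Kset_exists M x
  have hsupp : Function.support (fun e : E => ENNReal.ofReal (M.p e x))
      ⊆ {e : E | M.i e = j} := by
    intro e he
    by_contra hne
    simp [p_zero_of_ne M hj hne] at he
  have h1 := M.p_tsum_one j x hj
  have hsummable : Summable fun e : {e : E // M.i e = j} => M.p e.val x := by
    by_contra h
    rw [tsum_eq_zero_of_not_summable h] at h1
    norm_num at h1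
  calc ∑' e : E, ENNReal.ofReal (M.p e x)
      = ∑' e : {e : E | M.i e = j}, ENNReal.ofReal (M.p e.val x) :=
        (tsum_subtype_eq_of_support_subset hsupp).symm
    _ = ENNReal.ofReal (∑' e : {e : E // M.i e = j}, M.p e.val x) :=
        (ENNReal.ofReal_tsum_of_nonneg (fun e => M.p_nonneg _ _) hsummable).symm
    _ = 1 := by rw [h1]; simp

lemma adjOp_apply (ν : Measure K) {s : Set K} (hs : MeasurableSet s) :
    M.adjOp ν s = ∑' e : E, ∫⁻ x in (M.w e) ⁻¹' s, ENNReal.ofReal (M.p e x) ∂ν := by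
  rw [MarkovSystem.adjOp, Measure.sum_apply _ hs]
  congr 1
  ext e
  rw [Measure.map_apply (M.w_measurable e) hs,
    withDensity_apply _ ((M.w_measurable e) hs)]

lemma adjOp_univ (ν : Measure K) : M.adjOp ν Set.univ = ν Set.univ := by
  rw [adjOp_apply M ν MeasurableSet.univ]
  simp only [Set.preimage_univ, Measure.restrict_univ]
  rw [← lintegral_tsum (fun e => ((M.p_measurable e).ennreal_ofReal).aemeasurable)]
  simp [tsum_ofReal_p M]

lemma adjOp_iter_univ (x0 : K) (k : ℕ) :
    (M.adjOp)^[k] (Measure.dirac x0) Set.univ = 1 := by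
  induction k with
  | zero => simp
  | succ n ih => rw [Function.iterate_succ_apply', adjOp_univ M, ih]

/-- Key estimate: `(U*ν)(K_j) ≤ ⨆ i, ξ_i q_{ij}` for subprobability `ν`. -/
lemma adjOp_Kset_le (ν : Measure K) (hν : ν Set.univ ≤ 1) (j : N) :
    M.adjOp ν (M.Kset j) ≤ ⨆ i : N, M.xiq i j := by
  set s : E → ℝ≥0∞ := fun e => ⨆ x ∈ M.Kset (M.i e), ENNReal.ofReal (M.p e x) with hs
  rw [adjOp_apply M ν (M.Kset_measurable j)]
  have hterm : ∀ e : E,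
      ∫⁻ x in (M.w e) ⁻¹' M.Kset j, ENNReal.ofReal (M.p e x) ∂ν ≤
        (if M.t e = j then s e * ν (M.Kset (M.i e)) else 0) := by
    intro e
    have hpre : MeasurableSet ((M.w e) ⁻¹' M.Kset j) :=
      (M.w_measurable e) (M.Kset_measurable j)
    rw [← lintegral_indicator hpre]
    have hpt : ∀ x, Set.indicator ((M.w e) ⁻¹' M.Kset j)
        (fun x => ENNReal.ofReal (M.p e x)) x ≤
        (if M.t e = j then Set.indicator (M.Kset (M.i e)) (fun _ => s e) x else 0) := by
      intro x
      by_cases hxA : x ∈ (M.w e) ⁻¹' M.Kset j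
      · rw [Set.indicator_of_mem hxA]
        by_cases hxK : x ∈ M.Kset (M.i e)
        · have htj : M.t e = j := by
            by_contra hne
            exact Set.disjoint_left.mp (M.Kset_disjoint hne) (M.w_mapsTo e hxK) hxA
          rw [if_pos htj, Set.indicator_of_mem hxK]
          exact le_iSup₂ (f := fun x (_ : x ∈ M.Kset (M.i e)) => ENNReal.ofReal (M.p e x))
            x hxK
        · rw [M.p_zero_outside e x hxK]
          simp
      · rw [Set.indicator_of_notMem hxA]
        simp
    calc ∫⁻ x, Set.indicator ((M.w e) ⁻¹' M.Kset j)
            (fun x => ENNReal.ofReal (M.p e x)) x ∂ν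
        ≤ ∫⁻ x, (if M.t e = j then
            Set.indicator (M.Kset (M.i e)) (fun _ => s e) x else 0) ∂ν :=
          lintegral_mono hpt
      _ = (if M.t e = j then s e * ν (M.Kset (M.i e)) else 0) := by
          split_ifs with h
          · rw [lintegral_indicator_const (M.Kset_measurable _)]
          · simp
  refine le_trans (ENNReal.tsum_le_tsum hterm) ?_
  have hswap : ∑' e : E, (if M.t e = j then s e * ν (M.Kset (M.i e)) else 0)
      = ∑' i : N, (∑' e : E, (if M.i e = i ∧ M.t e = j then s e else 0)) * ν (M.Kset i) := by
    have h1 : ∀ e : E, (if M.t e = j then s e * ν (M.Kset (M.i e)) else 0)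
        = ∑' i : N, (if M.i e = i ∧ M.t e = j then s e else 0) * ν (M.Kset i) := by
      intro e
      rw [tsum_eq_single (M.i e) (by
        intro i hi
        rw [if_neg (fun h => hi (h.1.symm))]
        simp)]
      split_ifs with h1 h2 h3 <;> simp_all
    simp_rw [h1]
    rw [ENNReal.tsum_comm]
    congr 1
    ext i
    rw [ENNReal.tsum_mul_right]
  rw [hswap]
  have hxiq : ∀ i : N, (∑' e : E, (if M.i e = i ∧ M.t e = j then s e else 0)) = M.xiq i j := by
    intro i
    rw [MarkovSystem.xiq]
    have : ∀ e : {e : E // M.i e = i ∧ M.t e = j},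
        (⨆ x ∈ M.Kset i, ENNReal.ofReal (M.p e.val x)) = s e.val := by
      intro e
      have he : M.Kset (M.i e.val) = M.Kset i := by rw [e.prop.1]
      simp only [hs, he]
    rw [tsum_congr this]
    rw [show ∑' e : {e : E // M.i e = i ∧ M.t e = j}, s e.val
        = ∑' e : {e : E | M.i e = i ∧ M.t e = j}, s e.val from rfl,
      tsum_subtype]
    congr 1
    ext e
    simp [Set.indicator_apply]
  simp_rw [hxiq]
  calc ∑' i : N, M.xiq i j * ν (M.Kset i)
      ≤ ∑' i : N, (⨆ i' : N, M.xiq i' j) * ν (M.Kset i) :=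
        ENNReal.tsum_le_tsum fun i => mul_le_mul_left (le_iSup (fun i' => M.xiq i' j) i) _
    _ = (⨆ i' : N, M.xiq i' j) * ∑' i : N, ν (M.Kset i) := ENNReal.tsum_mul_left
    _ = (⨆ i' : N, M.xiq i' j) * ν Set.univ := by
        rw [← measure_iUnion M.Kset_disjoint M.Kset_measurable, M.Kset_cover]
    _ ≤ (⨆ i' : N, M.xiq i' j) * 1 := mul_le_mul_right hν _
    _ = ⨆ i' : N, M.xiq i' j := mul_one _

lemma alphaMeas_le (x0 : K) (n : ℕ) (j : N) :
    M.alphaMeas x0 (n + 1) j ≤ ⨆ i : N, M.xiq i j := by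
  rw [MarkovSystem.alphaMeas]
  have hterm : ∀ k ∈ Finset.range (n + 1),
      (M.adjOp)^[k + 1] (Measure.dirac x0) (M.Kset j) ≤ ⨆ i : N, M.xiq i j := by
    intro k _
    rw [Function.iterate_succ_apply']
    exact adjOp_Kset_le M _ (le_of_eq (adjOp_iter_univ M x0 k)) j
  calc ((n + 1 : ℕ) : ℝ≥0∞)⁻¹ * ∑ k ∈ Finset.range (n + 1),
          (M.adjOp)^[k + 1] (Measure.dirac x0) (M.Kset j)
      ≤ ((n + 1 : ℕ) : ℝ≥0∞)⁻¹ * ∑ _k ∈ Finset.range (n + 1), ⨆ i : N, M.xiq i j :=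
        mul_le_mul_right (Finset.sum_le_sum hterm) _
    _ = ((n + 1 : ℕ) : ℝ≥0∞)⁻¹ * (((n + 1 : ℕ) : ℝ≥0∞) * ⨆ i : N, M.xiq i j) := by
        rw [Finset.sum_const, Finset.card_range, nsmul_eq_mul]
    _ = ⨆ i : N, M.xiq i j := by
        rw [← mul_assoc, ENNReal.inv_mul_cancel (by exact_mod_cast Nat.succ_ne_zero n)
          (ENNReal.natCast_ne_top _), one_mul]

end ConditionTAux

/-- If `M` has a dominating Markov chain with `c < ∞`, then for every
`x₀ ∈ K` the sequence `(α^{x₀}_n)` is uniformly tight. -/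
theorem conditionT_of_dominating_chain
    (M : MarkovSystem K N E) (j0 : N) (xp : N → K) (hxp : ∀ j, xp j ∈ M.Kset j)
    (hdom : M.HasDominatingChain) (hc : M.cConst ≠ ⊤) (x0 : K) :
    M.ConditionT x0 := by
  intro ε hε
  have hc' : (∑' j : N, ⨆ i : N, M.xiq i j) ≠ ⊤ := hc
  have htail := ENNReal.tendsto_tsum_compl_atTop_zero (f := fun j : N => ⨆ i : N, M.xiq i j) hc'
  have hεpos : (0 : ℝ≥0∞) < ENNReal.ofReal ε := ENNReal.ofReal_pos.mpr hε
  obtain ⟨V, hV⟩ := (htail.eventually_lt_const hεpos).exists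
  refine ⟨V, fun n => lt_of_le_of_lt ?_ hV⟩
  exact ENNReal.tsum_le_tsum fun j => ConditionTAux.alphaMeas_le M x0 n j.val
end
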